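/- Under the Setup with Hypotheses (H2) and (H3), let y ∈ centre(L), let m_y be a lexicographically least element of { w ∈ adh(L) : y is a prefix of w } and M_y a lexicographically greatest element of that set. Then α_{m_y} = α_y and α_{M_y} = α_y + r_y. -/

import Mathlib

open Filter Topology

/-- The prefix of length `ℓ` of an infinite word `w : ℕ → A`. -/
def prefixOf {A : Type*} (w : ℕ → A) (ℓ : ℕ) : List A := List.ofFn (fun i : Fin ℓ => w i)

/-- The set of prefixes of words of a language `L`. -/
def pref {A : Type*} (L : Set (List A)) : Set (List A) := {u | ∃ v ∈ L, u <+: v}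

/-- The adherence of a language. -/
def adh {A : Type*} (L : Set (List A)) : Set (ℕ → A) :=
  {w | ∀ ℓ : ℕ, prefixOf w ℓ ∈ pref L}

/-- The center of a language: the finite prefixes of elements of the adherence. -/
def centre {A : Type*} (L : Set (List A)) : Set (List A) :=
  {u | ∃ w ∈ adh L, u = prefixOf w u.length}

/-- Transition function of a deterministic automaton extended to words. -/
def deltaStar {Q A : Type*} (δ : Q → A → Q) (q : Q) (w : List A) : Q := w.foldl δ q

/-- `ucomp δ F q n` : number of words of length `n` accepted from state `q`. -/
noncomputable def ucomp {Q A : Type*} (δ : Q → A → Q) (F : Set Q) (q : Q) (n : ℕ) : ℕ :=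
  {z : List A | z.length = n ∧ deltaStar δ q z ∈ F}.ncard

/-- `vcomp δ F q n` : number of words of length at most `n` accepted from state `q`. -/
noncomputable def vcomp {Q A : Type*} (δ : Q → A → Q) (F : Set Q) (q : Q) (n : ℕ) : ℕ :=
  ∑ m ∈ Finset.range (n + 1), ucomp δ F q m

open scoped Classical in
/-- For a word `y`, `alphaFin L r y = s₀ + Σ_{x ∈ centre(L), |x| = |y|, x <_lex y} r x`
where `s₀ = 1 - r ε`.  (Words of length `|y|` are enumerated as `List.ofFn f`
for `f : Fin |y| → A`.) -/
noncomputable def alphaFin {A : Type*} [Fintype A] [LinearOrder A]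
    (L : Set (List A)) (r : List A → ℝ) (y : List A) : ℝ :=
  (1 - r []) +
    ∑ f : Fin y.length → A,
      if List.ofFn f ∈ centre L ∧ List.Lex (· < ·) (List.ofFn f) y then r (List.ofFn f)
      else 0

set_option linter.unusedSectionVars false

section Basic
variable {Γ : Type*} [LinearOrder Γ]

lemma length_prefixOf (w : ℕ → Γ) (ℓ : ℕ) : (prefixOf w ℓ).length = ℓ := by
  simp [prefixOf]

lemma getElem_prefixOf (w : ℕ → Γ) {ℓ i : ℕ} (h : i < ℓ) :
    (prefixOf w ℓ)[i]'(by simp [length_prefixOf, h]) = w i := by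
  simp [prefixOf]

lemma prefixOf_succ (w : ℕ → Γ) (ℓ : ℕ) : prefixOf w (ℓ+1) = prefixOf w ℓ ++ [w ℓ] := by
  rw [prefixOf, List.ofFn_succ', List.concat_eq_append]; rfl

lemma prefixOf_prefix (w : ℕ → Γ) {k ℓ : ℕ} (h : k ≤ ℓ) : prefixOf w k <+: prefixOf w ℓ := by
  induction ℓ, h using Nat.le_induction with
  | base => exact List.prefix_refl _
  | succ ℓ hk ih => exact ih.trans (by rw [prefixOf_succ]; exact ⟨[w ℓ], rfl⟩)

lemma prefixOf_congr {w z : ℕ → Γ} {ℓ : ℕ} (h : ∀ i < ℓ, w i = z i) :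
    prefixOf w ℓ = prefixOf z ℓ :=
  congrArg List.ofFn (funext fun i => h i i.isLt)

lemma deltaStar_append {Q : Type*} (δ : Q → Γ → Q) (q : Q) (u v : List Γ) :
    deltaStar δ q (u ++ v) = deltaStar δ (deltaStar δ q u) v := List.foldl_append

lemma cons_lex_cons_iff (x y : Γ) (s t : List Γ) :
    List.Lex (· < ·) (x::s) (y::t) ↔ x < y ∨ (x = y ∧ List.Lex (· < ·) s t) := by
  constructor
  · intro h
    cases h with
    | cons h => exact Or.inr ⟨rfl, h⟩
    | rel h => exact Or.inl h
  · rintro (h | ⟨rfl, h⟩)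
    · exact List.Lex.rel h
    · exact List.Lex.cons h

lemma lex_append_singleton_iff (s t : List Γ) (h : s.length = t.length) (a b : Γ) :
    List.Lex (· < ·) (s ++ [a]) (t ++ [b]) ↔ List.Lex (· < ·) s t ∨ (s = t ∧ a < b) := by
  induction s generalizing t with
  | nil =>
    cases t with
    | nil => simp [cons_lex_cons_iff]
    | cons y t => simp at h
  | cons x s ih =>
    cases t with
    | nil => simp at h
    | cons y t =>
      simp only [List.length_cons, Nat.add_right_cancel_iff] at h
      simp only [List.cons_append, cons_lex_cons_iff, ih t h, List.cons.injEq]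
      tauto

lemma lex_irrefl (s : List Γ) : ¬ List.Lex (· < ·) s s := by
  intro h; exact (List.Lex.asymm (r := ((· < ·) : Γ → Γ → Prop))).asymm _ _ h h

lemma lex_asymm {s t : List Γ} (h : List.Lex (· < ·) s t) : ¬ List.Lex (· < ·) t s :=
  (List.Lex.asymm (r := ((· < ·) : Γ → Γ → Prop))).asymm _ _ h

lemma lex_trichotomy (s t : List Γ) :
    List.Lex (· < ·) s t ∨ s = t ∨ List.Lex (· < ·) t s :=
  trichotomous_of (List.Lex ((· < ·) : Γ → Γ → Prop)) s t

end Basic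

set_option linter.unusedSectionVars false

section Centre
variable {Γ : Type*} [LinearOrder Γ] {L : Set (List Γ)}

lemma prefixOf_mem_centre {w : ℕ → Γ} (hw : w ∈ adh L) (ℓ : ℕ) : prefixOf w ℓ ∈ centre L :=
  ⟨w, hw, by rw [length_prefixOf]⟩

lemma centre_parent {u : List Γ} {a : Γ} (h : u ++ [a] ∈ centre L) : u ∈ centre L := by
  obtain ⟨w, hw, hu⟩ := h
  rw [List.length_append, List.length_singleton, prefixOf_succ] at hu
  obtain ⟨h1, -⟩ := List.append_inj' hu rfl
  exact ⟨w, hw, h1⟩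

/-- From a centre element of the form `prefixOf w ℓ ++ [a]`, extract an adherent word. -/
lemma adh_of_centre_ext {w : ℕ → Γ} {ℓ : ℕ} {a : Γ}
    (h : prefixOf w ℓ ++ [a] ∈ centre L) :
    ∃ w' ∈ adh L, (∀ i < ℓ, w' i = w i) ∧ w' ℓ = a := by
  obtain ⟨w', hw', hu⟩ := h
  rw [List.length_append, List.length_singleton, length_prefixOf] at hu
  have h1 : ∀ i, i < ℓ + 1 → (prefixOf w ℓ ++ [a])[i]? = some (w' i) := by
    intro i hi
    rw [hu, List.getElem?_eq_getElem (by rw [length_prefixOf]; exact hi),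
      getElem_prefixOf w' hi]
  refine ⟨w', hw', ?_, ?_⟩
  · intro i hi
    have h2 := h1 i (Nat.lt_succ_of_lt hi)
    rw [List.getElem?_append_left (by simpa [length_prefixOf] using hi),
      List.getElem?_eq_getElem (by rw [length_prefixOf]; exact hi),
      getElem_prefixOf w hi] at h2
    exact (Option.some_injective _ h2).symm
  · have h2 := h1 ℓ (Nat.lt_succ_self ℓ)
    rw [List.getElem?_append_right (by rw [length_prefixOf])] at h2
    simp only [length_prefixOf, Nat.sub_self, List.getElem?_cons_zero] at h2
    exact (Option.some_injective _ h2).symm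

end Centre

section Snoc
variable {Γ : Type*}

def snocEquiv (n : ℕ) (Γ : Type*) : (Fin (n+1) → Γ) ≃ (Fin n → Γ) × Γ where
  toFun f := (fun i => f i.castSucc, f (Fin.last n))
  invFun p := Fin.snoc p.1 p.2
  left_inv f := by
    funext i
    induction i using Fin.lastCases with
    | last => simp
    | cast i => simp
  right_inv p := by
    ext i <;> simp

lemma ofFn_snocEquiv (n : ℕ) (f : Fin (n+1) → Γ) :
    List.ofFn f = List.ofFn ((snocEquiv n Γ) f).1 ++ [((snocEquiv n Γ) f).2] := by
  rw [List.ofFn_succ', List.concat_eq_append]; rfl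

lemma sum_split [Fintype Γ] (φ : List Γ → ℝ) (ℓ : ℕ) :
    ∑ f : Fin (ℓ+1) → Γ, φ (List.ofFn f)
      = ∑ g : Fin ℓ → Γ, ∑ a : Γ, φ (List.ofFn g ++ [a]) := by
  trans ∑ p : (Fin ℓ → Γ) × Γ, φ (List.ofFn p.1 ++ [p.2])
  · exact Fintype.sum_equiv (snocEquiv ℓ Γ) _ _ (fun f => by rw [← ofFn_snocEquiv])
  · exact Fintype.sum_prod_type _

end Snoc

open scoped Classical in
lemma alphaFin_eq {Γ : Type*} [Fintype Γ] [LinearOrder Γ] (L : Set (List Γ)) (r : List Γ → ℝ)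
    (y : List Γ) (n : ℕ) (h : y.length = n) :
    alphaFin L r y = (1 - r []) + ∑ f : Fin n → Γ,
      if List.ofFn f ∈ centre L ∧ List.Lex (· < ·) (List.ofFn f) y then r (List.ofFn f)
      else 0 := by
  subst h; rfl

section Count
variable {Γ : Type*} [Fintype Γ] {Q : Type*} (δ : Q → Γ → Q) (F : Set Q)

open scoped Classical in
lemma ucomp_card (q : Q) (n : ℕ) :
    ucomp δ F q n
      = (Finset.univ.filter (fun f : Fin n → Γ => deltaStar δ q (List.ofFn f) ∈ F)).card := by
  classical
  have hset : {z : List Γ | z.length = n ∧ deltaStar δ q z ∈ F}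
      = List.ofFn '' {f : Fin n → Γ | deltaStar δ q (List.ofFn f) ∈ F} := by
    ext z
    constructor
    · rintro ⟨hlen, hF⟩
      subst hlen
      exact ⟨z.get, by simpa using hF, by simp⟩
    · rintro ⟨f, hf, rfl⟩
      exact ⟨by simp, hf⟩
  rw [ucomp, hset, Set.ncard_image_of_injective _ List.ofFn_injective,
    Set.ncard_eq_toFinset_card', Set.toFinset_setOf]

set_option linter.deprecated false in
open scoped Classical in
lemma ucomp_succ (q : Q) (m : ℕ) :
    ucomp δ F q (m + 1) = ∑ a : Γ, ucomp δ F (δ q a) m := by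
  classical
  rw [ucomp_card, Finset.card_filter]
  have := Fintype.sum_equiv (Fin.consEquiv (fun _ : Fin (m+1) => Γ))
    (fun p : Γ × (Fin m → Γ) =>
      if deltaStar δ q (List.ofFn ((Fin.consEquiv (fun _ : Fin (m+1) => Γ)) p)) ∈ F then 1 else 0)
    (fun f : Fin (m+1) → Γ => if deltaStar δ q (List.ofFn f) ∈ F then 1 else 0)
    (fun p => rfl)
  rw [← this, Fintype.sum_prod_type]
  refine Finset.sum_congr rfl fun a _ => ?_
  rw [ucomp_card, Finset.card_filter]
  refine Finset.sum_congr rfl fun g _ => ?_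
  congr 1
  have : List.ofFn ((Fin.consEquiv (fun _ : Fin (m+1) => Γ)) (a, g)) = a :: List.ofFn g := by
    rw [List.ofFn_succ]
    simp [Fin.consEquiv]
  rw [this]
  rfl

end Count

section Konig
variable {Γ : Type*} [Fintype Γ] [LinearOrder Γ] {L : Set (List Γ)}

lemma mem_centre_of_all_ext (hpc : pref L = L) (u : List Γ)
    (h : ∀ m : ℕ, ∃ z : List Γ, z.length = m ∧ u ++ z ∈ L) : u ∈ centre L := by
  have hne : Nonempty Γ := by
    obtain ⟨z, hz, -⟩ := h 1
    cases z with
    | nil => simp at hz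
    | cons a _ => exact ⟨a⟩
  inhabit Γ
  letI : TopologicalSpace Γ := ⊥
  haveI : DiscreteTopology Γ := ⟨rfl⟩
  set C : ℕ → Set (ℕ → Γ) := fun n =>
    {w | prefixOf w (u.length + n) ∈ L ∧ prefixOf w u.length = u} with hC
  have hdec : ∀ n, C (n + 1) ⊆ C n := by
    intro n w ⟨h1, h2⟩
    refine ⟨?_, h2⟩
    rw [← hpc]
    exact ⟨prefixOf w (u.length + (n+1)), h1, prefixOf_prefix w (by omega)⟩
  have hnonempty : ∀ n, (C n).Nonempty := by
    intro n
    obtain ⟨z, hzlen, hzL⟩ := h n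
    have hlen : (u ++ z).length = u.length + n := by simp [hzlen]
    set wd : ℕ → Γ := fun i => if hi : i < u.length + n then (u ++ z)[i]'(by omega) else default
      with hwd
    have hfull : prefixOf wd (u.length + n) = u ++ z := by
      apply List.ext_getElem (by simp [length_prefixOf, hlen])
      intro i h1 h2
      rw [length_prefixOf] at h1
      rw [getElem_prefixOf _ h1, hwd]
      simp only [dif_pos h1]
    have hpre : prefixOf wd u.length = u := by
      have h1 : prefixOf wd u.length <+: u ++ z := hfull ▸ prefixOf_prefix wd (by omega)
      rw [List.prefix_iff_eq_take, length_prefixOf] at h1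
      rw [h1, List.take_left]
    exact ⟨wd, by rw [Set.mem_setOf_eq, hfull]; exact ⟨hzL, hpre⟩⟩
  have hclosed : ∀ n, IsClosed (C n) := by
    intro n
    have hcont : Continuous (fun (w : ℕ → Γ) (i : Fin (u.length + n)) => w (i : ℕ)) :=
      continuous_pi fun i => continuous_apply _
    have : C n = (fun (w : ℕ → Γ) (i : Fin (u.length + n)) => w (i : ℕ)) ⁻¹'
        {g : Fin (u.length + n) → Γ | List.ofFn g ∈ L
          ∧ List.ofFn (fun i : Fin u.length => g (Fin.castLE (by omega) i)) = u} := by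
      ext w
      simp only [Set.mem_preimage, Set.mem_setOf_eq, hC]
      rfl
    rw [this]
    exact (isClosed_discrete _).preimage hcont
  have hcompact : IsCompact (C 0) := (hclosed 0).isCompact
  obtain ⟨w, hw⟩ := IsCompact.nonempty_iInter_of_sequence_nonempty_isCompact_isClosed
    C hdec hnonempty hcompact hclosed
  simp only [Set.mem_iInter] at hw
  refine ⟨w, ?_, ((hw 0).2).symm⟩
  intro ℓ
  exact ⟨prefixOf w (u.length + ℓ), (hw ℓ).1, prefixOf_prefix w (by omega)⟩

end Konig

section Analytic
open Filter Topology
variable {Γ : Type*} [Fintype Γ] [LinearOrder Γ] {L : Set (List Γ)}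
  {Q : Type*} {q0 : Q} {δ : Q → Γ → Q} {F : Set Q} {r : List Γ → ℝ}

lemma r_zero (hpc : pref L = L) (hL : L = {x | deltaStar δ q0 x ∈ F})
    (hH2 : ∀ x : List Γ,
      Tendsto (fun n : ℕ =>
          (ucomp δ F (deltaStar δ q0 x) (n - x.length) : ℝ) / (vcomp δ F q0 n : ℝ))
        atTop (𝓝 (r x)))
    {u : List Γ} (hu : u ∉ centre L) : r u = 0 := by
  have h1 : ¬ ∀ m : ℕ, ∃ z : List Γ, z.length = m ∧ u ++ z ∈ L :=
    fun h => hu (mem_centre_of_all_ext hpc u h)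
  push_neg at h1
  obtain ⟨m0, hm0⟩ := h1
  have hzero : ∀ n, u.length + m0 ≤ n → ucomp δ F (deltaStar δ q0 u) (n - u.length) = 0 := by
    intro n hn
    have hempty : {z : List Γ | z.length = n - u.length ∧
        deltaStar δ (deltaStar δ q0 u) z ∈ F} = ∅ := by
      ext z
      simp only [Set.mem_setOf_eq, Set.mem_empty_iff_false, iff_false, not_and]
      intro hlen hF
      have hinL : u ++ z ∈ L := by
        rw [hL, Set.mem_setOf_eq, deltaStar_append]; exact hF
      have htake : u ++ z.take m0 ∈ L := by
        rw [← hpc]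
        exact ⟨u ++ z, hinL, (List.prefix_append_right_inj u).mpr (List.take_prefix m0 z)⟩
      exact hm0 (z.take m0) (by rw [List.length_take]; omega) htake
    rw [ucomp, hempty, Set.ncard_empty]
  refine tendsto_nhds_unique (hH2 u) ?_
  refine Tendsto.congr' ?_ tendsto_const_nhds
  filter_upwards [eventually_ge_atTop (u.length + m0)] with n hn
  rw [hzero n hn]
  simp

lemma r_add
    (hH2 : ∀ x : List Γ,
      Tendsto (fun n : ℕ =>
          (ucomp δ F (deltaStar δ q0 x) (n - x.length) : ℝ) / (vcomp δ F q0 n : ℝ))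
        atTop (𝓝 (r x)))
    (x : List Γ) : r x = ∑ a : Γ, r (x ++ [a]) := by
  have h2 : Tendsto (fun n : ℕ => ∑ a : Γ,
      (ucomp δ F (deltaStar δ q0 (x ++ [a])) (n - (x ++ [a]).length) : ℝ) / (vcomp δ F q0 n : ℝ))
      atTop (𝓝 (∑ a : Γ, r (x ++ [a]))) :=
    tendsto_finset_sum _ (fun a _ => hH2 (x ++ [a]))
  refine tendsto_nhds_unique (hH2 x) (h2.congr' ?_)
  filter_upwards [eventually_ge_atTop (x.length + 1)] with n hn
  have hδ : ∀ a : Γ, deltaStar δ q0 (x ++ [a]) = δ (deltaStar δ q0 x) a := by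
    intro a; rw [deltaStar_append]; rfl
  have hcount : ∑ a : Γ, ucomp δ F (δ (deltaStar δ q0 x) a) (n - (x.length + 1))
      = ucomp δ F (deltaStar δ q0 x) (n - x.length) := by
    rw [← ucomp_succ]
    congr 1
    omega
  calc ∑ a : Γ, (ucomp δ F (deltaStar δ q0 (x ++ [a])) (n - (x ++ [a]).length) : ℝ)
        / (vcomp δ F q0 n : ℝ)
      = (∑ a : Γ, (ucomp δ F (δ (deltaStar δ q0 x) a) (n - (x.length + 1)) : ℝ))
        / (vcomp δ F q0 n : ℝ) := by
        rw [Finset.sum_div]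
        refine Finset.sum_congr rfl fun a _ => ?_
        rw [hδ a, List.length_append, List.length_singleton]
    _ = (ucomp δ F (deltaStar δ q0 x) (n - x.length) : ℝ) / (vcomp δ F q0 n : ℝ) := by
        rw [← Nat.cast_sum, hcount]

end Analytic

open scoped Classical in
lemma alpha_step {Γ : Type*} [Fintype Γ] [LinearOrder Γ] (L : Set (List Γ)) (r : List Γ → ℝ)
    (hr0 : ∀ u : List Γ, u ∉ centre L → r u = 0)
    (hadd : ∀ u : List Γ, r u = ∑ a : Γ, r (u ++ [a]))
    (w : ℕ → Γ) (ℓ : ℕ) :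
    alphaFin L r (prefixOf w (ℓ+1)) = alphaFin L r (prefixOf w ℓ)
      + ∑ a : Γ, (if prefixOf w ℓ ++ [a] ∈ centre L ∧ a < w ℓ
          then r (prefixOf w ℓ ++ [a]) else 0) := by
  rw [alphaFin_eq L r _ (ℓ+1) (length_prefixOf w (ℓ+1)),
      alphaFin_eq L r _ ℓ (length_prefixOf w ℓ), add_assoc]
  congr 1
  have hsplit := sum_split (fun x : List Γ =>
    if x ∈ centre L ∧ List.Lex (· < ·) x (prefixOf w (ℓ+1)) then r x else 0) ℓ
  rw [hsplit]
  have hg : ∀ g : Fin ℓ → Γ,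
      (∑ a : Γ, if List.ofFn g ++ [a] ∈ centre L
          ∧ List.Lex (· < ·) (List.ofFn g ++ [a]) (prefixOf w (ℓ+1))
        then r (List.ofFn g ++ [a]) else 0)
      = (if List.ofFn g ∈ centre L ∧ List.Lex (· < ·) (List.ofFn g) (prefixOf w ℓ)
          then r (List.ofFn g) else 0)
        + (if g = (fun i : Fin ℓ => w i)
            then (∑ a : Γ, if prefixOf w ℓ ++ [a] ∈ centre L ∧ a < w ℓ
              then r (prefixOf w ℓ ++ [a]) else 0) else 0) := by
    intro g
    have hlen : (List.ofFn g).length = (prefixOf w ℓ).length := by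
      rw [length_prefixOf, List.length_ofFn]
    have hlex : ∀ a : Γ, List.Lex (· < ·) (List.ofFn g ++ [a]) (prefixOf w (ℓ+1)) ↔
        (List.Lex (· < ·) (List.ofFn g) (prefixOf w ℓ)
          ∨ (List.ofFn g = prefixOf w ℓ ∧ a < w ℓ)) := by
      intro a; rw [prefixOf_succ]; exact lex_append_singleton_iff _ _ hlen a (w ℓ)
    rcases lex_trichotomy (List.ofFn g) (prefixOf w ℓ) with hcase | hcase | hcase
    · -- strictly smaller
      have hne : List.ofFn g ≠ prefixOf w ℓ := fun he => lex_irrefl _ (he ▸ hcase)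
      have hL1 : (∑ a : Γ, if List.ofFn g ++ [a] ∈ centre L
            ∧ List.Lex (· < ·) (List.ofFn g ++ [a]) (prefixOf w (ℓ+1))
          then r (List.ofFn g ++ [a]) else 0) = r (List.ofFn g) := by
        rw [hadd (List.ofFn g)]
        refine Finset.sum_congr rfl fun a _ => ?_
        by_cases hc : List.ofFn g ++ [a] ∈ centre L
        · rw [if_pos ⟨hc, (hlex a).2 (Or.inl hcase)⟩]
        · rw [if_neg (fun hh => hc hh.1), hr0 _ hc]
      have h2 : (if g = (fun i : Fin ℓ => w i)
          then (∑ a : Γ, if prefixOf w ℓ ++ [a] ∈ centre L ∧ a < w ℓ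
            then r (prefixOf w ℓ ++ [a]) else 0) else 0) = 0 :=
        if_neg (fun he => hne (by rw [he]; rfl))
      rw [hL1, h2, add_zero]
      by_cases hc : List.ofFn g ∈ centre L
      · rw [if_pos ⟨hc, hcase⟩]
      · rw [if_neg (fun hh => hc hh.1), hr0 _ hc]
    · -- equal
      have hgw : g = fun i : Fin ℓ => w i := List.ofFn_injective hcase
      rw [if_neg (fun hh => lex_irrefl _ (hcase ▸ hh.2)), if_pos hgw, zero_add]
      refine Finset.sum_congr rfl fun a _ => ?_
      rw [hcase] at hlex ⊢
      refine if_congr (and_congr_right fun _ => ?_) rfl rfl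
      rw [hlex a]
      constructor
      · rintro (h | ⟨-, h⟩)
        · exact absurd h (lex_irrefl _)
        · exact h
      · exact fun h => Or.inr ⟨rfl, h⟩
    · -- strictly greater
      have hne : List.ofFn g ≠ prefixOf w ℓ := fun he => lex_irrefl _ (he ▸ hcase)
      have hL1 : ∀ a : Γ, ¬ (List.ofFn g ++ [a] ∈ centre L
          ∧ List.Lex (· < ·) (List.ofFn g ++ [a]) (prefixOf w (ℓ+1))) := by
        intro a hh
        rcases (hlex a).1 hh.2 with h' | h'
        · exact lex_asymm hcase h'
        · exact hne h'.1
      rw [if_neg (fun hh => lex_asymm hcase hh.2),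
        if_neg (fun he => hne (by rw [he]; rfl)), add_zero]
      refine Finset.sum_eq_zero fun a _ => if_neg (hL1 a)
  rw [Finset.sum_congr rfl (fun g _ => hg g), Finset.sum_add_distrib]
  congr 1
  rw [Finset.sum_ite_eq' Finset.univ (fun i : Fin ℓ => w i)
    (fun _ => ∑ a : Γ, if prefixOf w ℓ ++ [a] ∈ centre L ∧ a < w ℓ
      then r (prefixOf w ℓ ++ [a]) else 0), if_pos (Finset.mem_univ _)]

/-- Lexicographic order on infinite words induced by the order on the alphabet. -/
def infLexLe {A : Type*} [LinearOrder A] (w z : ℕ → A) : Prop :=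
  w = z ∨ ∃ k : ℕ, (∀ i < k, w i = z i) ∧ w k < z k

theorem stmt_15 {Γ : Type*} [Fintype Γ] [LinearOrder Γ]
    (L : Set (List Γ)) (hLinf : L.Infinite) (hpc : pref L = L)
    {Q : Type*} (q0 : Q) (δ : Q → Γ → Q) (F : Set Q)
    (hacc : ∀ q : Q, ∃ x : List Γ, deltaStar δ q0 x = q)
    (hL : L = {x | deltaStar δ q0 x ∈ F})
    (r : List Γ → ℝ)
    (hH2 : ∀ x : List Γ,
      Tendsto (fun n : ℕ =>
          (ucomp δ F (deltaStar δ q0 x) (n - x.length) : ℝ) / (vcomp δ F q0 n : ℝ))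
        atTop (𝓝 (r x)))
    (hH3 : ∀ w ∈ adh L, Tendsto (fun ℓ : ℕ => r (prefixOf w ℓ)) atTop (𝓝 0))
    (y : List Γ) (hy : y ∈ centre L)
    (my My : ℕ → Γ)
    -- `my` is a lexicographically least element of the set of words of `adh L`
    -- having `y` as a prefix
    (hmy : my ∈ adh L ∧ prefixOf my y.length = y ∧
      ∀ w ∈ adh L, prefixOf w y.length = y → infLexLe my w)
    -- `My` is a lexicographically greatest element of that set
    (hMy : My ∈ adh L ∧ prefixOf My y.length = y ∧
      ∀ w ∈ adh L, prefixOf w y.length = y → infLexLe w My)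
    (am aM : ℝ)
    (ham : Tendsto (fun ℓ : ℕ => alphaFin L r (prefixOf my ℓ)) atTop (𝓝 am))
    (haM : Tendsto (fun ℓ : ℕ => alphaFin L r (prefixOf My ℓ)) atTop (𝓝 aM)) :
    am = alphaFin L r y ∧ aM = alphaFin L r y + r y := by

  classical
  obtain ⟨hmadh, hmpre, hmmin⟩ := hmy
  obtain ⟨hMadh, hMpre, hMmax⟩ := hMy
  have hr0 : ∀ u : List Γ, u ∉ centre L → r u = 0 := fun u hu => r_zero hpc hL hH2 hu
  have hadd : ∀ u : List Γ, r u = ∑ a : Γ, r (u ++ [a]) := fun u => r_add hH2 u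
  constructor
  · -- minimal word
    have key : ∀ ℓ, y.length ≤ ℓ → alphaFin L r (prefixOf my ℓ) = alphaFin L r y := by
      intro ℓ hℓ
      induction ℓ, hℓ using Nat.le_induction with
      | base => rw [hmpre]
      | succ ℓ hℓ ih =>
        rw [alpha_step L r hr0 hadd my ℓ, ih]
        have hz : ∀ a : Γ, (if prefixOf my ℓ ++ [a] ∈ centre L ∧ a < my ℓ
            then r (prefixOf my ℓ ++ [a]) else 0) = 0 := by
          intro a
          rw [if_neg]
          rintro ⟨hc, hlt⟩
          obtain ⟨w', hw', hagree, hwa⟩ := adh_of_centre_ext hc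
          have hypre : prefixOf w' y.length = y := by
            rw [prefixOf_congr (fun i hi => hagree i (lt_of_lt_of_le hi hℓ)), hmpre]
          rcases (hmmin w' hw' hypre : my = w' ∨ _) with heq | ⟨k, hk, hklt⟩
          · have hma : my ℓ = a := by rw [heq]; exact hwa
            rw [hma] at hlt; exact lt_irrefl a hlt
          · rcases lt_trichotomy k ℓ with h' | h' | h'
            · rw [hagree k h'] at hklt; exact lt_irrefl _ hklt
            · subst h'; rw [hwa] at hklt; exact lt_irrefl _ (hlt.trans hklt)
            · have h2 := hk ℓ h'
              rw [hwa] at h2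
              rw [h2] at hlt; exact lt_irrefl _ hlt
        rw [Finset.sum_eq_zero (fun a _ => hz a), add_zero]
    refine tendsto_nhds_unique ham ?_
    refine Tendsto.congr' ?_ tendsto_const_nhds
    filter_upwards [eventually_ge_atTop y.length] with ℓ hℓ
    exact (key ℓ hℓ).symm
  · -- maximal word
    have key : ∀ ℓ, y.length ≤ ℓ → alphaFin L r (prefixOf My ℓ) + r (prefixOf My ℓ)
        = alphaFin L r y + r y := by
      intro ℓ hℓ
      induction ℓ, hℓ using Nat.le_induction with
      | base => rw [hMpre]
      | succ ℓ hℓ ih =>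
        rw [alpha_step L r hr0 hadd My ℓ]
        have hdecomp : r (prefixOf My ℓ)
            = (∑ a : Γ, if prefixOf My ℓ ++ [a] ∈ centre L ∧ a < My ℓ
                then r (prefixOf My ℓ ++ [a]) else 0) + r (prefixOf My (ℓ+1)) := by
          have hpt : ∀ a : Γ, r (prefixOf My ℓ ++ [a])
              = (if prefixOf My ℓ ++ [a] ∈ centre L ∧ a < My ℓ
                  then r (prefixOf My ℓ ++ [a]) else 0)
                + (if a = My ℓ then r (prefixOf My (ℓ+1)) else 0) := by
            intro a
            rcases lt_trichotomy a (My ℓ) with h' | h' | h'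
            · rw [if_neg (fun he : a = My ℓ => lt_irrefl _ (he ▸ h')), add_zero]
              by_cases hc : prefixOf My ℓ ++ [a] ∈ centre L
              · rw [if_pos ⟨hc, h'⟩]
              · rw [if_neg (fun hh => hc hh.1), hr0 _ hc]
            · rw [if_neg (fun hh => lt_irrefl _ (h' ▸ hh.2)), if_pos h', zero_add, h',
                ← prefixOf_succ]
            · have hzero : r (prefixOf My ℓ ++ [a]) = 0 := by
                by_cases hc : prefixOf My ℓ ++ [a] ∈ centre L
                · exfalso
                  obtain ⟨w', hw', hagree, hwa⟩ := adh_of_centre_ext hc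
                  have hypre : prefixOf w' y.length = y := by
                    rw [prefixOf_congr (fun i hi => hagree i (lt_of_lt_of_le hi hℓ)), hMpre]
                  rcases (hMmax w' hw' hypre : w' = My ∨ _) with heq | ⟨k, hk, hklt⟩
                  · have : a = My ℓ := by rw [← hwa, heq]
                    rw [this] at h'; exact lt_irrefl _ h'
                  · rcases lt_trichotomy k ℓ with h2 | h2 | h2
                    · rw [hagree k h2] at hklt; exact lt_irrefl _ hklt
                    · subst h2; rw [hwa] at hklt; exact lt_irrefl _ (h'.trans hklt)
                    · have h3 := hk ℓ h2
                      rw [hwa] at h3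
                      rw [← h3] at h'; exact lt_irrefl _ h'
                · exact hr0 _ hc
              rw [hzero, if_neg (fun hh => lt_asymm h' hh.2),
                if_neg (fun he : a = My ℓ => lt_irrefl _ (he ▸ h')), add_zero]
          rw [hadd (prefixOf My ℓ), Finset.sum_congr rfl (fun a _ => hpt a),
            Finset.sum_add_distrib,
            Finset.sum_ite_eq' Finset.univ (My ℓ) (fun _ => r (prefixOf My (ℓ+1))),
            if_pos (Finset.mem_univ _)]
        rw [add_assoc, ← hdecomp]
        exact ih
    have h1 : Tendsto (fun ℓ : ℕ => alphaFin L r (prefixOf My ℓ) + r (prefixOf My ℓ))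
        atTop (𝓝 (aM + 0)) := haM.add (hH3 My hMadh)
    have h2 : Tendsto (fun ℓ : ℕ => alphaFin L r (prefixOf My ℓ) + r (prefixOf My ℓ))
        atTop (𝓝 (alphaFin L r y + r y)) := by
      refine Tendsto.congr' ?_ tendsto_const_nhds
      filter_upwards [eventually_ge_atTop y.length] with ℓ hℓ
      exact (key ℓ hℓ).symm
    have := tendsto_nhds_unique h1 h2
    linarith
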